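/- Let 0 < b < 1 and S₀ ∈ (b, 1). Let P₀ ∈ (0, b) be such that b·log P₀ − P₀ = b·log S₀ − S₀ (so (P₀, 0) and (S₀, 0) lie on the same level set of the first-integral of the layer equation), and let S₁ ∈ (b, 1) be such that S₁ − P₀ + (1 − b)·log((1 − S₁)/(1 − P₀)) = 0 (so S₁ is the exit point determined by the entry–exit function applied to the entry point P₀). Then S₁ < S₀; i.e., the Poincaré map Π = Π₂ ∘ Π₁ of the fast–slow SIR dynamics satisfies Π(S₀) < S₀. -/

import Mathlib

/-- `log t > 2(t-1)/(t+1)` for `t > 1`. -/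
lemma log_gt_aux {t : ℝ} (ht : 1 < t) : 2*(t-1)/(t+1) < Real.log t := by
  have key : StrictMonoOn (fun s : ℝ => Real.log s + 4/(s+1)) (Set.Ici 1) := by
    apply strictMonoOn_of_deriv_pos (convex_Ici 1)
    · apply ContinuousOn.add
      · exact Real.continuousOn_log.mono (by intro s hs; simp at hs ⊢; linarith)
      · apply ContinuousOn.div continuousOn_const (by fun_prop)
        intro s hs; simp at hs; intro h; linarith
    · intro s hs
      rw [interior_Ici] at hs
      have hs1 : (1:ℝ) < s := hs
      have hs0 : (0:ℝ) < s := by linarith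
      have hsp : s + 1 ≠ 0 := by linarith
      have hd : HasDerivAt (fun s : ℝ => Real.log s + 4/(s+1))
          (1/s + 4 * (-(1 * 1) / ((s+1)^2))) s := by
        have h4 : HasDerivAt (fun s : ℝ => 4/(s+1)) (4 * (-(1*1) / ((s+1)^2))) s := by
          simpa [div_eq_mul_inv] using
            ((((hasDerivAt_id s).add_const 1).inv hsp).const_mul 4)
        exact ((Real.hasDerivAt_log (ne_of_gt hs0)).add h4).congr_deriv (by ring)
      rw [hd.deriv]
      have heq : 1/s + 4 * (-(1*1)/((s+1)^2)) = (s-1)^2 / (s*(s+1)^2) := by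
        field_simp; ring
      rw [heq]
      have hne : s - 1 ≠ 0 := by intro h; linarith
      positivity
  have h2 : Real.log 1 + 4/(1+1) < Real.log t + 4/(t+1) :=
    key (by simp) (by simp; linarith) ht
  simp [Real.log_one] at h2
  have htp : (0:ℝ) < t + 1 := by linarith
  rw [div_lt_iff₀ htp]
  have h3 : 4 / (t+1) = 4 / (t+1) := rfl
  have h4 : (2 - 4/(t+1)) < Real.log t := by linarith
  have h5 : 2*(t-1) = (2 - 4/(t+1)) * (t+1) := by field_simp; ring
  calc 2*(t-1) = (2 - 4/(t+1)) * (t+1) := h5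
    _ < Real.log t * (t+1) := by
        apply mul_lt_mul_of_pos_right h4 htp

lemma two_mul_div_lt_log {x y : ℝ} (hx : 0 < x) (hxy : x < y) :
    2*(y-x)/(y+x) < Real.log (y/x) := by
  have ht : 1 < y/x := (one_lt_div hx).2 hxy
  have := log_gt_aux ht
  have hyx : y + x ≠ 0 := ne_of_gt (by linarith)
  have he : 2*(y/x-1)/(y/x+1) = 2*(y-x)/(y+x) := by
    field_simp
    try ring
  linarith [he ▸ this]

/-- The Poincaré map `Π = Π₂ ∘ Π₁` of the fast–slow SIR dynamics moves points to
the left: `S₁ = Π(S₀) < S₀`. Here `b` plays the role of `1/R₀ = γ/β`. -/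
theorem poincare_map_decreasing
    (b S₀ P₀ S₁ : ℝ) (hb : 0 < b) (hb1 : b < 1)
    (hS₀ : S₀ ∈ Set.Ioo b 1)
    (hP₀ : P₀ ∈ Set.Ioo 0 b)
    (hP₀eq : b * Real.log P₀ - P₀ = b * Real.log S₀ - S₀)
    (hS₁ : S₁ ∈ Set.Ioo b 1)
    (hS₁eq : S₁ - P₀ + (1 - b) * Real.log ((1 - S₁) / (1 - P₀)) = 0) :
    S₁ < S₀ := by
  obtain ⟨hS₀b, hS₀1⟩ := hS₀
  obtain ⟨hP₀0, hP₀b⟩ := hP₀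
  obtain ⟨hS₁b, hS₁1⟩ := hS₁
  have hPS : P₀ < S₀ := by linarith
  have h1S₀ : (0:ℝ) < 1 - S₀ := by linarith
  have h1P₀ : (0:ℝ) < 1 - P₀ := by linarith
  -- From the first integral: S₀ - P₀ = b * log (S₀/P₀)
  have hlogdiv : Real.log (S₀ / P₀) = Real.log S₀ - Real.log P₀ :=
    Real.log_div (by linarith) (by linarith)
  have hA : b * Real.log (S₀ / P₀) = S₀ - P₀ := by rw [hlogdiv]; linarith
  -- Step A: b < (S₀+P₀)/2
  have hA1 : 2*(S₀-P₀)/(S₀+P₀) < Real.log (S₀/P₀) := two_mul_div_lt_log hP₀0 hPS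
  have hSP0 : (0:ℝ) < S₀ + P₀ := by linarith
  have hbA : 2 * b < S₀ + P₀ := by
    have h2 : b * (2*(S₀-P₀)/(S₀+P₀)) < S₀ - P₀ := by
      calc b * (2*(S₀-P₀)/(S₀+P₀)) < b * Real.log (S₀/P₀) :=
            mul_lt_mul_of_pos_left hA1 hb
        _ = S₀ - P₀ := hA
    have h2' : b*2*(S₀-P₀) < (S₀-P₀)*(S₀+P₀) := by
      calc b*2*(S₀-P₀) = (b * (2*(S₀-P₀)/(S₀+P₀)))*(S₀+P₀) := by field_simp
        _ < (S₀-P₀)*(S₀+P₀) := mul_lt_mul_of_pos_right h2 hSP0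
    nlinarith
  -- Step B: (1-b) * log((1-P₀)/(1-S₀)) > S₀ - P₀
  have hB1 : 2*((1-P₀)-(1-S₀))/((1-P₀)+(1-S₀)) < Real.log ((1-P₀)/(1-S₀)) :=
    two_mul_div_lt_log h1S₀ (by linarith)
  have hden : (0:ℝ) < (1-P₀)+(1-S₀) := by linarith
  have hB : S₀ - P₀ < (1-b) * Real.log ((1-P₀)/(1-S₀)) := by
    have h1b : (1-P₀)+(1-S₀) < 2*(1-b) := by linarith
    have hlpos : 0 < Real.log ((1-P₀)/(1-S₀)) := by
      apply Real.log_pos; rw [lt_div_iff₀ h1S₀]; linarith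
    have h3 : 2*((1-P₀)-(1-S₀)) < ((1-P₀)+(1-S₀)) * Real.log ((1-P₀)/(1-S₀)) := by
      rw [div_lt_iff₀ hden] at hB1; linarith
    nlinarith
  -- so g(S₀) < 0 where g x = x - P₀ + (1-b) log ((1-x)/(1-P₀))
  have hlogS₀ : Real.log ((1-S₀)/(1-P₀)) = - Real.log ((1-P₀)/(1-S₀)) := by
    rw [← Real.log_inv]; congr 1; field_simp
  have hgS₀ : S₀ - P₀ + (1-b) * Real.log ((1-S₀)/(1-P₀)) < 0 := by
    rw [hlogS₀]; linarith
  -- Monotonicity: u x = x + (1-b) * log (1-x) is antitone on Ico b 1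
  by_contra hcon
  push_neg at hcon  -- S₀ ≤ S₁
  have hanti : AntitoneOn (fun x : ℝ => x + (1-b) * Real.log (1-x)) (Set.Ico b 1) := by
    apply antitoneOn_of_deriv_nonpos (convex_Ico b 1)
    · apply ContinuousOn.add continuousOn_id
      apply ContinuousOn.mul continuousOn_const
      apply ContinuousOn.comp Real.continuousOn_log (by fun_prop)
      intro x hx; simp at hx ⊢; linarith [hx.2]
    · apply DifferentiableOn.add differentiableOn_id
      apply DifferentiableOn.const_mul
      intro x hx
      rw [interior_Ico] at hx
      have : (1:ℝ) - x ≠ 0 := by simp at hx; intro h; linarith [hx.2]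
      exact ((Real.differentiableAt_log this).comp x (by fun_prop)).differentiableWithinAt
    · intro x hx
      rw [interior_Ico] at hx
      obtain ⟨hxb, hx1⟩ := hx
      have h1x : (0:ℝ) < 1 - x := by linarith
      have hd : HasDerivAt (fun x : ℝ => x + (1-b) * Real.log (1-x))
          (1 + (1-b) * ((-1)/(1-x))) x := by
        have hlog : HasDerivAt (fun x : ℝ => Real.log (1-x)) ((-1)/(1-x)) x := by
          have : HasDerivAt (fun x : ℝ => 1 - x) (-1) x := by
            simpa using (hasDerivAt_id x).const_sub 1
          exact ((Real.hasDerivAt_log (ne_of_gt h1x)).comp x this).congr_deriv (by ring)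
        exact ((hasDerivAt_id x).add (hlog.const_mul (1-b))).congr_deriv (by ring)
      rw [hd.deriv]
      have : 1 + (1-b) * ((-1)/(1-x)) = (b - x)/(1-x) := by field_simp; try ring
      rw [this]
      apply div_nonpos_of_nonpos_of_nonneg <;> linarith
  have hmem₀ : S₀ ∈ Set.Ico b 1 := ⟨le_of_lt hS₀b, hS₀1⟩
  have hmem₁ : S₁ ∈ Set.Ico b 1 := ⟨le_of_lt hS₁b, hS₁1⟩
  have hle := hanti hmem₀ hmem₁ hcon
  simp only at hle
  -- rewrite logs: log((1-x)/(1-P₀)) = log(1-x) - log(1-P₀)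
  have e₀ : Real.log ((1-S₀)/(1-P₀)) = Real.log (1-S₀) - Real.log (1-P₀) :=
    Real.log_div (ne_of_gt h1S₀) (ne_of_gt h1P₀)
  have e₁ : Real.log ((1-S₁)/(1-P₀)) = Real.log (1-S₁) - Real.log (1-P₀) :=
    Real.log_div (by intro h; linarith) (ne_of_gt h1P₀)
  rw [e₀] at hgS₀
  rw [e₁] at hS₁eq
  ring_nf at hgS₀ hS₁eq hle
  linarith
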